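/- Under the same first-step scheme assumptions, the following H¹-type bound holds: ∑_i h_i((U_i¹ − Φ_i)/Δt)² + (1/12)∑_{i=0}^{N} ℓ_{i+1/2}(U¹_{i+1} − U¹_i)² ≤ ∑_i h_i Ψ_i² + (9/4)∑_{i=0}^N ℓ_{i+1/2}(Φ_{i+1} − Φ_i)² + (Δt² + 2δ²/C₂⁴)∑_{i=0}^N ℓ_{i+1/2}(Ψ_{i+1} − Ψ_i)². -/

import Mathlib

open Finset

/-- The right-hand side of the first-step implicit scheme: the Kelvin–Voigt term
built from the discretized initial velocity `Ψ` on the damped region. -/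
noncomputable def rhs0KV (δ h : ℝ) (Nα Nd : ℕ) (Ψ : ℕ → ℝ) (i : ℕ) : ℝ :=
  if i = Nα + 1 then δ * (Ψ (i + 1) - Ψ i) / h
  else if Nα + 2 ≤ i ∧ i ≤ Nα + Nd - 1 then
    δ * (Ψ (i + 1) - 2 * Ψ i + Ψ (i - 1)) / h
  else if i = Nα + Nd then -(δ * (Ψ i - Ψ (i - 1)) / h)
  else 0

/-- Auxiliary: discrete gradient of `Ψ` restricted to the damped region. -/
private noncomputable def qfun (Nα Nd : ℕ) (Ψ : ℕ → ℝ) (i : ℕ) : ℝ :=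
  if Nα + 1 ≤ i ∧ i ≤ Nα + Nd - 1 then Ψ (i + 1) - Ψ i else 0

private lemma telescope (g W : ℕ → ℝ) (N : ℕ) :
    ∑ i ∈ range (N + 1), ((g i - g (i - 1)) * W i + g i * (W (i + 1) - W i))
      = g N * W (N + 1) - g 0 * W 0 := by
  have h2 := Finset.sum_range_sub (fun j => g (j - 1) * W j) (N + 1)
  simp only [Nat.add_sub_cancel, Nat.zero_sub] at h2
  rw [← h2]
  exact Finset.sum_congr rfl (fun i _ => by ring)

private lemma sbp (g W : ℕ → ℝ) (N : ℕ) (hW0 : W 0 = 0) (hWN : W (N + 1) = 0) :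
    ∑ i ∈ Icc 1 N, (g i - g (i - 1)) * W i
      = -∑ i ∈ range (N + 1), g i * (W (i + 1) - W i) := by
  have h1 : ∑ i ∈ range (N + 1), (g i - g (i - 1)) * W i
      = ∑ i ∈ Icc 1 N, (g i - g (i - 1)) * W i := by
    rw [Finset.range_eq_Ico, Finset.sum_eq_sum_Ico_succ_bot (Nat.succ_pos N)]
    rw [hW0, mul_zero, zero_add]
    norm_num [Finset.Ico_add_one_right_eq_Icc]
  have h2 := telescope g W N
  rw [Finset.sum_add_distrib, h1, hW0, hWN] at h2
  simp only [mul_zero, sub_zero, zero_sub, sub_self] at h2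
  linarith

private lemma rhs0KV_eq (δ h : ℝ) (Nα Nd : ℕ) (Ψ : ℕ → ℝ) (hNd : 2 ≤ Nd)
    {i : ℕ} (hi1 : 1 ≤ i) :
    rhs0KV δ h Nα Nd Ψ i = δ / h * (qfun Nα Nd Ψ i - qfun Nα Nd Ψ (i - 1)) := by
  have hii : i - 1 + 1 = i := by omega
  unfold rhs0KV qfun
  split_ifs <;> first
    | (exfalso; omega)
    | (rw [hii]; ring1)
    | ring1

private lemma young_grad (L T M s a b c : ℝ) (hL : 0 ≤ L) (hs0 : 0 ≤ s)
    (hsM : s ^ 2 ≤ M) :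
    L * (1 / 12 * b ^ 2 - 9 / 4 * a ^ 2 - (T ^ 2 + 2 * M) * c ^ 2)
      ≤ L * b * (b - a) - T * (L * c * (b - a)) + s * (L * (c * (b - a))) := by
  have h1 : 1 / 12 * b ^ 2 - 9 / 4 * a ^ 2 - (T ^ 2 + 2 * M) * c ^ 2
      ≤ b * (b - a) - T * (c * (b - a)) + s * (c * (b - a)) := by
    nlinarith [sq_nonneg (3 * a - b), sq_nonneg (T * c - b), sq_nonneg (T * c + a),
      sq_nonneg (s * c + b / 2), sq_nonneg (s * c - a / 2),
      mul_le_mul_of_nonneg_right hsM (sq_nonneg c)]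
  calc L * (1 / 12 * b ^ 2 - 9 / 4 * a ^ 2 - (T ^ 2 + 2 * M) * c ^ 2)
      ≤ L * (b * (b - a) - T * (c * (b - a)) + s * (c * (b - a))) :=
        mul_le_mul_of_nonneg_left h1 hL
    _ = L * b * (b - a) - T * (L * c * (b - a)) + s * (L * (c * (b - a))) := by ring

/-- First-time-step H¹-type stability estimate for the implicit finite volume
scheme: the discrete time derivative of `U¹` in L² and its discrete H¹ semi-norm
are bounded by the initial data `Φ`, `Ψ`. -/
theorem first_step_H1_stability
    (Nmax Nα Nd : ℕ) (hNα : 1 ≤ Nα) (hNd : 2 ≤ Nd) (hsum : Nα + Nd ≤ Nmax)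
    (Δt δ h C2 : ℝ) (hΔt : 0 < Δt) (hδ : 0 ≤ δ) (hh : 0 < h) (hC2 : 0 < C2)
    (hi : ℕ → ℝ) (hipos : ∀ i ∈ Icc 1 Nmax, 0 < hi i)
    (ℓ : ℕ → ℝ) (hℓpos : ∀ i ∈ range (Nmax + 1), 0 < ℓ i)
    (hℓdamp : ∀ i ∈ Icc Nα (Nα + Nd - 1), ℓ i = C2 ^ 2 / h)
    (U1 Φ Ψ : ℕ → ℝ)
    (hU10 : U1 0 = 0) (hU1N : U1 (Nmax + 1) = 0)
    (hΦ0 : Φ 0 = 0) (hΦN : Φ (Nmax + 1) = 0)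
    (hΨ0 : Ψ 0 = 0) (hΨN : Ψ (Nmax + 1) = 0)
    (hscheme : ∀ i ∈ Icc 1 Nmax,
      2 * hi i * (U1 i - Φ i) / Δt ^ 2 - (2 * hi i / Δt) * Ψ i -
        (ℓ i * (U1 (i + 1) - U1 i) - ℓ (i - 1) * (U1 i - U1 (i - 1))) +
        Δt * (ℓ i * (Ψ (i + 1) - Ψ i) - ℓ (i - 1) * (Ψ i - Ψ (i - 1))) =
        rhs0KV δ h Nα Nd Ψ i) :
    ∑ i ∈ Icc 1 Nmax, hi i * ((U1 i - Φ i) / Δt) ^ 2 +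
        (1 / 12) * ∑ i ∈ range (Nmax + 1), ℓ i * (U1 (i + 1) - U1 i) ^ 2 ≤
      ∑ i ∈ Icc 1 Nmax, hi i * (Ψ i) ^ 2 +
        (9 / 4) * ∑ i ∈ range (Nmax + 1), ℓ i * (Φ (i + 1) - Φ i) ^ 2 +
        (Δt ^ 2 + 2 * δ ^ 2 / C2 ^ 4) *
          ∑ i ∈ range (Nmax + 1), ℓ i * (Ψ (i + 1) - Ψ i) ^ 2 := by
  have hΔt' : Δt ≠ 0 := ne_of_gt hΔt
  have hh' : h ≠ 0 := ne_of_gt hh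
  have hC2' : C2 ≠ 0 := ne_of_gt hC2
  set W : ℕ → ℝ := fun i => U1 i - Φ i with hWdef
  set gU : ℕ → ℝ := fun i => ℓ i * (U1 (i + 1) - U1 i) with hgU
  set gP : ℕ → ℝ := fun i => ℓ i * (Ψ (i + 1) - Ψ i) with hgP
  have hW0 : W 0 = 0 := by simp [hWdef, hU10, hΦ0]
  have hWN : W (Nmax + 1) = 0 := by simp [hWdef, hU1N, hΦN]
  -- per-index identity: the scheme tested against W i
  have key : ∀ i ∈ Icc 1 Nmax,
      2 * hi i * (W i / Δt) ^ 2 - 2 * hi i * Ψ i * (W i / Δt)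
        - (gU i - gU (i - 1)) * W i + Δt * ((gP i - gP (i - 1)) * W i)
        - δ / h * ((qfun Nα Nd Ψ i - qfun Nα Nd Ψ (i - 1)) * W i) = 0 := by
    intro i hmem
    have h1 : 1 ≤ i := (Finset.mem_Icc.mp hmem).1
    have hii : i - 1 + 1 = i := by omega
    have hs := hscheme i hmem
    rw [rhs0KV_eq δ h Nα Nd Ψ hNd h1] at hs
    simp only [hgU, hgP, hWdef]
    rw [hii]
    linear_combination (U1 i - Φ i) * hs
  -- conversion of the KV term to a weighted gradient sum
  have hqs : ∀ i ∈ range (Nmax + 1),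
      δ / h * (qfun Nα Nd Ψ i * (W (i + 1) - W i))
        = (if Nα + 1 ≤ i ∧ i ≤ Nα + Nd - 1 then δ / C2 ^ 2 else 0)
            * (ℓ i * ((Ψ (i + 1) - Ψ i) * (W (i + 1) - W i))) := by
    intro i _
    unfold qfun
    split_ifs with hc
    · rw [hℓdamp i (Finset.mem_Icc.mpr ⟨by omega, hc.2⟩)]
      field_simp
    · simp
  have hTS : δ / h * (∑ i ∈ range (Nmax + 1), qfun Nα Nd Ψ i * (W (i + 1) - W i))
      = ∑ i ∈ range (Nmax + 1),
          (if Nα + 1 ≤ i ∧ i ≤ Nα + Nd - 1 then δ / C2 ^ 2 else 0)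
            * (ℓ i * ((Ψ (i + 1) - Ψ i) * (W (i + 1) - W i))) := by
    rw [Finset.mul_sum]
    exact Finset.sum_congr rfl hqs
  -- master identity
  have hid : (∑ i ∈ Icc 1 Nmax, 2 * hi i * (W i / Δt) ^ 2)
      - (∑ i ∈ Icc 1 Nmax, 2 * hi i * Ψ i * (W i / Δt))
      + (∑ i ∈ range (Nmax + 1), gU i * (W (i + 1) - W i))
      - Δt * (∑ i ∈ range (Nmax + 1), gP i * (W (i + 1) - W i))
      + (∑ i ∈ range (Nmax + 1),
          (if Nα + 1 ≤ i ∧ i ≤ Nα + Nd - 1 then δ / C2 ^ 2 else 0)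
            * (ℓ i * ((Ψ (i + 1) - Ψ i) * (W (i + 1) - W i)))) = 0 := by
    have h5 := Finset.sum_eq_zero key
    simp only [Finset.sum_sub_distrib, Finset.sum_add_distrib] at h5
    simp only [← Finset.mul_sum] at h5
    rw [sbp gU W Nmax hW0 hWN, sbp gP W Nmax hW0 hWN,
      sbp (qfun Nα Nd Ψ) W Nmax hW0 hWN] at h5
    linear_combination h5 - hTS
  -- L² part estimate
  have haveA : (∑ i ∈ Icc 1 Nmax, hi i * ((U1 i - Φ i) / Δt) ^ 2)
      - (∑ i ∈ Icc 1 Nmax, hi i * (Ψ i) ^ 2)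
      ≤ (∑ i ∈ Icc 1 Nmax, 2 * hi i * (W i / Δt) ^ 2)
      - (∑ i ∈ Icc 1 Nmax, 2 * hi i * Ψ i * (W i / Δt)) := by
    rw [← Finset.sum_sub_distrib, ← Finset.sum_sub_distrib]
    apply Finset.sum_le_sum
    intro i hmem
    have hp := (hipos i hmem).le
    have hW' : W i = U1 i - Φ i := by rw [hWdef]
    rw [hW']
    nlinarith [mul_nonneg hp (sq_nonneg ((U1 i - Φ i) / Δt - Ψ i))]
  -- gradient part estimate
  have hBsum : (∑ i ∈ range (Nmax + 1), gU i * (W (i + 1) - W i))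
      - Δt * (∑ i ∈ range (Nmax + 1), gP i * (W (i + 1) - W i))
      + (∑ i ∈ range (Nmax + 1),
          (if Nα + 1 ≤ i ∧ i ≤ Nα + Nd - 1 then δ / C2 ^ 2 else 0)
            * (ℓ i * ((Ψ (i + 1) - Ψ i) * (W (i + 1) - W i))))
      = ∑ i ∈ range (Nmax + 1), (gU i * (W (i + 1) - W i)
          - Δt * (gP i * (W (i + 1) - W i))
          + (if Nα + 1 ≤ i ∧ i ≤ Nα + Nd - 1 then δ / C2 ^ 2 else 0)
              * (ℓ i * ((Ψ (i + 1) - Ψ i) * (W (i + 1) - W i)))) := by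
    rw [Finset.mul_sum, ← Finset.sum_sub_distrib, ← Finset.sum_add_distrib]
  have haveB : (∑ i ∈ range (Nmax + 1), ℓ i * (1 / 12 * (U1 (i + 1) - U1 i) ^ 2
        - 9 / 4 * (Φ (i + 1) - Φ i) ^ 2
        - (Δt ^ 2 + 2 * (δ ^ 2 / C2 ^ 4)) * (Ψ (i + 1) - Ψ i) ^ 2))
      ≤ (∑ i ∈ range (Nmax + 1), gU i * (W (i + 1) - W i))
      - Δt * (∑ i ∈ range (Nmax + 1), gP i * (W (i + 1) - W i))
      + (∑ i ∈ range (Nmax + 1),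
          (if Nα + 1 ≤ i ∧ i ≤ Nα + Nd - 1 then δ / C2 ^ 2 else 0)
            * (ℓ i * ((Ψ (i + 1) - Ψ i) * (W (i + 1) - W i)))) := by
    rw [hBsum]
    apply Finset.sum_le_sum
    intro i hmem
    have hL : 0 ≤ ℓ i := (hℓpos i hmem).le
    have hd : W (i + 1) - W i = (U1 (i + 1) - U1 i) - (Φ (i + 1) - Φ i) := by
      simp only [hWdef]; ring
    simp only [hgU, hgP]
    rw [hd]
    set s : ℝ := if Nα + 1 ≤ i ∧ i ≤ Nα + Nd - 1 then δ / C2 ^ 2 else 0 with hsdef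
    have hs0 : 0 ≤ s := by
      rw [hsdef]; split_ifs
      · exact div_nonneg hδ (by positivity)
      · exact le_refl 0
    have hsM : s ^ 2 ≤ δ ^ 2 / C2 ^ 4 := by
      rw [hsdef]; split_ifs
      · refine le_of_eq ?_
        rw [div_pow, ← pow_mul]
      · norm_num
        positivity
    exact le_trans (le_of_eq (by ring))
      (young_grad (ℓ i) Δt (δ ^ 2 / C2 ^ 4) s (Φ (i + 1) - Φ i) (U1 (i + 1) - U1 i)
        (Ψ (i + 1) - Ψ i) hL hs0 hsM)
  -- splitting the gradient LHS
  have hBsplit : (∑ i ∈ range (Nmax + 1), ℓ i * (1 / 12 * (U1 (i + 1) - U1 i) ^ 2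
        - 9 / 4 * (Φ (i + 1) - Φ i) ^ 2
        - (Δt ^ 2 + 2 * (δ ^ 2 / C2 ^ 4)) * (Ψ (i + 1) - Ψ i) ^ 2))
      = (1 / 12) * (∑ i ∈ range (Nmax + 1), ℓ i * (U1 (i + 1) - U1 i) ^ 2)
        - (9 / 4) * (∑ i ∈ range (Nmax + 1), ℓ i * (Φ (i + 1) - Φ i) ^ 2)
        - (Δt ^ 2 + 2 * δ ^ 2 / C2 ^ 4)
            * (∑ i ∈ range (Nmax + 1), ℓ i * (Ψ (i + 1) - Ψ i) ^ 2) := by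
    rw [Finset.mul_sum, Finset.mul_sum, Finset.mul_sum, ← Finset.sum_sub_distrib,
      ← Finset.sum_sub_distrib]
    exact Finset.sum_congr rfl (fun i _ => by ring)
  linarith [hid, haveA, haveB, hBsplit]
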